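/- (Reestimation of WCMTT is unnecessary for low-priority FT messages on an ideal CAN bus.) Let M be a finite set of messages with pairwise distinct priorities p_j∈{1,…,k−1} (smaller number = higher priority), transmission times C_j>0, periods T_j>0 and jitters J_j≥0, and let S≥C_j for all j∈M be the predefined transmission time reserved for the (unused) priority-k message. For i∈M, define the blocking time B_i:=max({C_j : j∈M, p_j>p_i}∪{S})=S, the higher-priority set hp(i):={j∈M : p_j<p_i}, the worst-case queuing delay w_i as the least w≥0 with w=B_i+Σ_{j∈hp(i)} ⌈(w+J_j+τ)/T_j⌉·C_j (assumed to exist), and the WCMTT R_i:=w_i+C_i. Let M'=M∪N where every message x∈N has priority ≥k and transmission time C_x≤S. Then for every i∈M, the higher-priority set, blocking time, worst-case queuing delay and WCMTT of i computed in M' (with the same blocking convention) are identical to those computed in M; i.e., the newly added messages do not change the WCMTT of any message of priority 1,…,k−1. -/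

import Mathlib

/-- (Reestimation of the WCMTT is unnecessary for
low-priority FT messages on an ideal CAN bus.)  `M` is a set of messages with
pairwise distinct priorities `p_j ∈ {1,…,k-1}` (smaller = higher priority),
transmission times `C`, periods `T`, jitters `J`; `S ≥ C_j` is the reserved
transmission time of the unused priority-`k` message, and the blocking time of
`i` is `max({C_j : p_j > p_i} ∪ {S})` (computed as a `Finset.fold max S C`).
`w i` is the least nonnegative solution of the queuing-delay equation of `i`
in `M`, and `w' i` the one in `M' = M ∪ N`, where every `x ∈ N` has priority
`≥ k` and `C x ≤ S`.  Then for every `i ∈ M` the higher-priority set, the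
blocking time, the worst-case queuing delay and the WCMTT `R_i = w_i + C_i`
computed in `M'` coincide with those computed in `M`. -/
theorem can_wcmtt_unchanged_by_low_priority_messages
    {ι : Type*} [DecidableEq ι] (M N : Finset ι) (hMN : Disjoint M N)
    (k : ℕ) (p : ι → ℕ) (C T J : ι → ℚ) (τ S : ℚ)
    (hdist : Set.InjOn p ↑M)
    (hpr : ∀ j ∈ M, 1 ≤ p j ∧ p j < k)
    (hC : ∀ j ∈ M, 0 < C j) (hT : ∀ j ∈ M, 0 < T j) (hJ : ∀ j ∈ M, 0 ≤ J j)
    (hτ : 0 ≤ τ)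
    (hS : ∀ j ∈ M, C j ≤ S)
    (hN : ∀ x ∈ N, k ≤ p x ∧ C x ≤ S)
    (w w' : ι → ℚ)
    (hw : ∀ i ∈ M, IsLeast {u : ℚ | 0 ≤ u ∧
      ((M.filter fun j => p i < p j).fold max S C) +
        ∑ j ∈ M.filter (fun j => p j < p i),
          (⌈(u + J j + τ) / T j⌉ : ℚ) * C j = u} (w i))
    (hw' : ∀ i ∈ M, IsLeast {u : ℚ | 0 ≤ u ∧
      (((M ∪ N).filter fun j => p i < p j).fold max S C) +
        ∑ j ∈ (M ∪ N).filter (fun j => p j < p i),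
          (⌈(u + J j + τ) / T j⌉ : ℚ) * C j = u} (w' i)) :
    ∀ i ∈ M,
      (M ∪ N).filter (fun j => p j < p i) = M.filter (fun j => p j < p i) ∧
      ((M ∪ N).filter fun j => p i < p j).fold max S C =
        (M.filter fun j => p i < p j).fold max S C ∧
      w' i = w i ∧
      w' i + C i = w i + C i := by
  have fold_eq : ∀ s : Finset ι, (∀ j ∈ s, C j ≤ S) → s.fold max S C = S := by
    intro s
    induction s using Finset.induction_on with
    | empty => intro _; rfl
    | insert _ _ hnot ih =>
      intro h
      rw [Finset.fold_insert hnot, ih (fun j hj => h j (Finset.mem_insert_of_mem hj))]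
      exact max_eq_right (h _ (Finset.mem_insert_self _ _))
  intro i hi
  have hfilter : (M ∪ N).filter (fun j => p j < p i) = M.filter (fun j => p j < p i) := by
    ext j
    simp only [Finset.mem_filter, Finset.mem_union]
    constructor
    · rintro ⟨hj | hj, hlt⟩
      · exact ⟨hj, hlt⟩
      · exact absurd hlt (not_lt.2 (le_trans (le_of_lt (hpr i hi).2) (hN j hj).1))
    · rintro ⟨hj, hlt⟩; exact ⟨Or.inl hj, hlt⟩
  have hfold1 : ((M ∪ N).filter fun j => p i < p j).fold max S C = S := by
    apply fold_eq
    intro j hj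
    rcases Finset.mem_union.1 (Finset.mem_filter.1 hj).1 with h | h
    · exact hS j h
    · exact (hN j h).2
  have hfold2 : ((M.filter fun j => p i < p j)).fold max S C = S := by
    apply fold_eq
    intro j hj
    exact hS j (Finset.mem_filter.1 hj).1
  have h1 := hw i hi
  have h2 := hw' i hi
  rw [hfilter, hfold1] at h2
  rw [hfold2] at h1
  have hww : w' i = w i := le_antisymm (h2.2 h1.1) (h1.2 h2.1)
  exact ⟨hfilter, hfold1.trans hfold2.symm, hww, by rw [hww]⟩
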